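/- Fix an integer W ≥ 2 and constants C_2, …, C_W > 0. For each n ≥ 2, consider a random hypergraph on vertex set [n] = {1,…,n} in which, for each d ∈ {2,…,W} and each d-element subset h of [n], the hyperedge h is present independently with some probability q_h ≤ C_d · log n / C(n−1, d−1), where C(·,·) denotes the binomial coefficient. Let r_n = ⌈n / (log n)³⌉, let T_n ⊆ [n] be any fixed subset with |T_n| = 4 r_n, and let T'_n be the set obtained from T_n by deleting every node that belongs to some present hyperedge containing at least two nodes of T_n. Then P( |T'_n| ≥ 3 r_n ) → 1 as n → ∞. -/

import Mathlib

open MeasureTheory ProbabilityTheory Filter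
open scoped ENNReal NNReal

lemma count_bound {n d : ℕ} (T : Finset (Fin n)) (H : Finset (Finset (Fin n)))
    (hH : ∀ h ∈ H, h.card = d ∧ 2 ≤ (h ∩ T).card) :
    H.card ≤ T.card.choose 2 * (n-2).choose (d-2) := by
  classical
  have hsub : H ⊆ (T.powersetCard 2).biUnion
      (fun p => ((Finset.univ \ p).powersetCard (d-2)).image (fun s => p ∪ s)) := by
    intro h hh
    obtain ⟨hcard, hint⟩ := hH h hh
    obtain ⟨p, hpsub, hpcard⟩ := Finset.exists_subset_card_eq hint
    have hph : p ⊆ h := hpsub.trans Finset.inter_subset_left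
    refine Finset.mem_biUnion.2 ⟨p, Finset.mem_powersetCard.2
      ⟨hpsub.trans Finset.inter_subset_right, hpcard⟩, ?_⟩
    refine Finset.mem_image.2 ⟨h \ p, Finset.mem_powersetCard.2
      ⟨Finset.sdiff_subset_sdiff (Finset.subset_univ h) le_rfl, ?_⟩, Finset.union_sdiff_of_subset hph⟩
    rw [Finset.card_sdiff_of_subset hph, hcard, hpcard]
  calc H.card ≤ _ := Finset.card_le_card hsub
    _ ≤ ∑ p ∈ T.powersetCard 2, (((Finset.univ \ p).powersetCard (d-2)).image (fun s => p ∪ s)).card :=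
        Finset.card_biUnion_le
    _ ≤ ∑ p ∈ T.powersetCard 2, (n-2).choose (d-2) := by
        refine Finset.sum_le_sum fun p hp => ?_
        refine (Finset.card_image_le).trans ?_
        rw [Finset.card_powersetCard, Finset.card_sdiff_of_subset (Finset.subset_univ p),
          Finset.card_univ, Fintype.card_fin, (Finset.mem_powersetCard.1 hp).2]
    _ = _ := by rw [Finset.sum_const, Finset.card_powersetCard, smul_eq_mul]

lemma measurable_comp_E {n : ℕ} {Ω β : Type*} [MeasurableSpace Ω] [MeasurableSpace β]
    (E : Finset (Fin n) → Ω → Bool) (hmeas : ∀ h, Measurable (E h))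
    (g : (Finset (Fin n) → Bool) → β) : Measurable (fun ω => g (fun h => E h ω)) :=
  (measurable_of_countable g).comp (measurable_pi_lambda _ hmeas)

lemma key_bound (W : ℕ) (C : ℕ → ℝ) (hC : ∀ d ∈ Finset.Icc 2 W, 0 < C d)
    {Ω : Type*} [MeasurableSpace Ω] (μ : Measure Ω) [IsProbabilityMeasure μ]
    (n : ℕ) (E : Finset (Fin n) → Ω → Bool)
    (hmeas : ∀ h, Measurable (E h))
    (hprob : ∀ h : Finset (Fin n), 2 ≤ h.card → h.card ≤ W →
      μ {ω | E h ω = true} ≤ ENNReal.ofReal (C h.card * Real.log n / ((n - 1).choose (h.card - 1))))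
    (R : ℕ) (T : Finset (Fin n)) (hT : T.card = 4 * R)
    (hn : W ≤ n) (hn2 : 2 ≤ n) :
    μ {ω | 3 * R ≤ (T.filter (fun v =>
        ∀ h : Finset (Fin n), 2 ≤ h.card → h.card ≤ W → E h ω = true →
          v ∈ h → (h ∩ T).card < 2)).card}ᶜ
      ≤ ENNReal.ofReal (16 * W * (∑ d ∈ Finset.Icc 2 W, C d * ((d-1 : ℕ):ℝ)) * R
          * Real.log n / ((n-1 : ℕ):ℝ)) := by
  classical
  set K : ℝ := ∑ d ∈ Finset.Icc 2 W, C d * ((d-1 : ℕ):ℝ) with hKdef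
  set P : Ω → Fin n → Prop := fun ω v =>
    ∀ h : Finset (Fin n), 2 ≤ h.card → h.card ≤ W → E h ω = true →
          v ∈ h → (h ∩ T).card < 2 with hP
  set D : Ω → Finset (Fin n) := fun ω => T.filter (fun v => ¬ P ω v) with hD
  set H : Finset (Finset (Fin n)) := Finset.univ.filter
    (fun h : Finset (Fin n) => (2 ≤ h.card ∧ h.card ≤ W) ∧ 2 ≤ (h ∩ T).card) with hHdef
  have hlogn : 0 ≤ Real.log n := Real.log_natCast_nonneg n
  -- nonnegativity of per-edge bound
  have hbnonneg : ∀ h ∈ H, 0 ≤ (W:ℝ) * (C h.card * Real.log n / ((n - 1).choose (h.card - 1))) := by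
    intro h hh
    have := (Finset.mem_filter.1 hh).2
    have hc : 0 < C h.card := hC _ (Finset.mem_Icc.2 ⟨this.1.1, this.1.2⟩)
    positivity
  -- step 1: bad event inclusion
  have hsub : {ω | 3 * R ≤ (T.filter (fun v => P ω v)).card}ᶜ
      ⊆ {ω | ((R+1 : ℕ) : ℝ≥0∞) ≤ ((D ω).card : ℝ≥0∞)} := by
    intro ω hω
    simp only [Set.mem_compl_iff, Set.mem_setOf_eq, not_le] at hω
    have hsplit := Finset.card_filter_add_card_filter_not (s := T) (p := fun v => P ω v)
    rw [hT] at hsplit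
    have hle : R + 1 ≤ (T.filter (fun v => ¬ P ω v)).card := by omega
    show ((R+1 : ℕ) : ℝ≥0∞) ≤ ((D ω).card : ℝ≥0∞)
    exact Nat.cast_le.2 hle
  -- step 2: pointwise bound on card D
  have hpoint : ∀ ω, (((D ω).card : ℝ≥0∞)) ≤ ∑ h ∈ H, (if E h ω = true then (W : ℝ≥0∞) else 0) := by
    intro ω
    have hDsub : D ω ⊆ (H.filter (fun h => E h ω = true)).biUnion (fun h => h ∩ T) := by
      intro v hv
      rw [hD, Finset.mem_filter] at hv
      obtain ⟨hvT, hnp⟩ := hv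
      simp only [hP] at hnp; push_neg at hnp
      obtain ⟨h, h1, h2, h3, h4, h5⟩ := hnp
      exact Finset.mem_biUnion.2 ⟨h, Finset.mem_filter.2 ⟨Finset.mem_filter.2
        ⟨Finset.mem_univ _, ⟨h1, h2⟩, h5⟩, h3⟩, Finset.mem_inter.2 ⟨h4, hvT⟩⟩
    have hnat : (D ω).card ≤ ∑ h ∈ H, (if E h ω = true then W else 0) := by
      calc (D ω).card ≤ _ := Finset.card_le_card hDsub
        _ ≤ ∑ h ∈ H.filter (fun h => E h ω = true), (h ∩ T).card := Finset.card_biUnion_le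
        _ ≤ ∑ h ∈ H.filter (fun h => E h ω = true), W := by
            refine Finset.sum_le_sum fun h hh => ?_
            have := ((Finset.mem_filter.1 (Finset.mem_filter.1 hh).1).2).1.2
            exact le_trans (Finset.card_le_card Finset.inter_subset_left) this
        _ = ∑ h ∈ H, (if E h ω = true then W else 0) := by rw [Finset.sum_filter]
    calc ((D ω).card : ℝ≥0∞) ≤ ((∑ h ∈ H, (if E h ω = true then W else 0) : ℕ) : ℝ≥0∞) := by
          exact_mod_cast Nat.cast_le.2 hnat
      _ = _ := by push_cast; exact Finset.sum_congr rfl fun h _ => by split <;> simp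
  -- step 3: Markov
  have hfmeas : Measurable (fun ω => (((D ω).card : ℝ≥0∞))) := by
    have := measurable_comp_E (β := ℝ≥0∞) E hmeas (fun b =>
      ((T.filter (fun v => ¬ (∀ h : Finset (Fin n), 2 ≤ h.card → h.card ≤ W → b h = true →
          v ∈ h → (h ∩ T).card < 2))).card : ℝ≥0∞))
    exact this
  have hmarkov : ((R+1 : ℕ) : ℝ≥0∞) * μ {ω | 3 * R ≤ (T.filter (fun v => P ω v)).card}ᶜ
      ≤ ∫⁻ ω, ((D ω).card : ℝ≥0∞) ∂μ := by
    refine le_trans (mul_le_mul_right (measure_mono hsub) _) ?_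
    exact mul_meas_ge_le_lintegral₀ hfmeas.aemeasurable _
  -- step 4: lintegral bound
  have hEmeas : ∀ h : Finset (Fin n), MeasurableSet {ω | E h ω = true} :=
    fun h => (hmeas h) (measurableSet_singleton true)
  have hlint : ∫⁻ ω, ((D ω).card : ℝ≥0∞) ∂μ
      ≤ ∑ h ∈ H, (W : ℝ≥0∞) * μ {ω | E h ω = true} := by
    calc ∫⁻ ω, ((D ω).card : ℝ≥0∞) ∂μ
        ≤ ∫⁻ ω, ∑ h ∈ H, (if E h ω = true then (W : ℝ≥0∞) else 0) ∂μ := lintegral_mono hpoint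
      _ = ∑ h ∈ H, ∫⁻ ω, (if E h ω = true then (W : ℝ≥0∞) else 0) ∂μ := by
          refine lintegral_finset_sum _ fun h _ => Measurable.ite (hEmeas h) measurable_const measurable_const
      _ = ∑ h ∈ H, (W : ℝ≥0∞) * μ {ω | E h ω = true} := by
          refine Finset.sum_congr rfl fun h _ => ?_
          rw [← lintegral_indicator_const (hEmeas h)]
          congr 1; ext ω; rw [Set.indicator_apply]; rfl
  -- step 5: sum of probabilities, to real
  have hsum : ∑ h ∈ H, (W : ℝ≥0∞) * μ {ω | E h ω = true}
      ≤ ENNReal.ofReal (∑ h ∈ H, (W:ℝ) * (C h.card * Real.log n / ((n - 1).choose (h.card - 1)))) := by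
    rw [ENNReal.ofReal_sum_of_nonneg hbnonneg]
    refine Finset.sum_le_sum fun h hh => ?_
    have hmem := (Finset.mem_filter.1 hh).2
    rw [ENNReal.ofReal_mul (by positivity), ENNReal.ofReal_natCast]
    exact mul_le_mul_right (hprob h hmem.1.1 hmem.1.2) _
  -- step 6: real estimate
  have hreal : ∑ h ∈ H, (W:ℝ) * (C h.card * Real.log n / ((n - 1).choose (h.card - 1)))
      ≤ ((R+1 : ℕ):ℝ) * (16 * W * K * R * Real.log n / ((n-1 : ℕ):ℝ)) := by
    have hnn : (0:ℝ) < ((n-1 : ℕ):ℝ) := by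
      have : 1 ≤ n - 1 := by omega
      exact_mod_cast Nat.lt_of_lt_of_le Nat.zero_lt_one this
    have hK0 : 0 ≤ K := Finset.sum_nonneg fun d hd =>
      mul_nonneg (hC d hd).le (Nat.cast_nonneg _)
    have hmaps : ∀ h ∈ H, h.card ∈ Finset.Icc 2 W := fun h hh => by
      have := (Finset.mem_filter.1 hh).2.1
      exact Finset.mem_Icc.2 this
    rw [← Finset.sum_fiberwise_of_maps_to hmaps]
    have hterm : ∀ d ∈ Finset.Icc 2 W,
        ∑ h ∈ H.filter (fun h => h.card = d), (W:ℝ) * (C h.card * Real.log n / ((n - 1).choose (h.card - 1)))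
        ≤ (16*(R:ℝ)^2*W*Real.log n/((n-1 : ℕ):ℝ)) * (C d * ((d-1 : ℕ):ℝ)) := by
      intro d hd
      obtain ⟨hd2, hdW⟩ := Finset.mem_Icc.1 hd
      have hdn : d ≤ n := hdW.trans hn
      have hchpos : 0 < ((n-1).choose (d-1)) := Nat.choose_pos (by omega)
      have ha : (0:ℝ) < (((n-1).choose (d-1) : ℕ) : ℝ) := by exact_mod_cast hchpos
      have hCd : 0 < C d := hC d hd
      -- count
      have hNd : (H.filter (fun h => h.card = d)).card ≤ (4*R).choose 2 * (n-2).choose (d-2) := by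
        rw [← hT]
        refine count_bound T _ fun h hh => ?_
        exact ⟨(Finset.mem_filter.1 hh).2, (Finset.mem_filter.1 (Finset.mem_filter.1 hh).1).2.2⟩
      have hch2 : (4*R).choose 2 ≤ 16 * R^2 := by
        rw [Nat.choose_two_right]
        calc 4*R*(4*R-1)/2 ≤ 4*R*(4*R-1) := Nat.div_le_self _ _
          _ ≤ 4*R*(4*R) := Nat.mul_le_mul_left _ (Nat.sub_le _ _)
          _ = 16 * R^2 := by ring
      have hNd' : ((H.filter (fun h => h.card = d)).card : ℝ)
          ≤ 16*(R:ℝ)^2 * ((n-2).choose (d-2) : ℝ) := by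
        have := hNd.trans (Nat.mul_le_mul_right _ hch2)
        calc ((H.filter (fun h => h.card = d)).card : ℝ)
            ≤ ((16 * R^2 * (n-2).choose (d-2) : ℕ) : ℝ) := by exact_mod_cast this
          _ = 16*(R:ℝ)^2 * ((n-2).choose (d-2) : ℝ) := by push_cast; ring
      -- choose identity
      have hid : (n-1) * (n-2).choose (d-2) = (n-1).choose (d-1) * (d-1) := by
        have h1 : n - 1 = (n-2) + 1 := by omega
        have h2 : d - 1 = (d-2) + 1 := by omega
        rw [h1, h2]
        exact Nat.add_one_mul_choose_eq (n-2) (d-2)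
      have hba : ((n-2).choose (d-2) : ℝ) / (((n-1).choose (d-1) : ℕ) : ℝ)
          = ((d-1 : ℕ):ℝ) / ((n-1 : ℕ):ℝ) := by
        rw [div_eq_div_iff ha.ne' hnn.ne']
        have : (((n-1) * (n-2).choose (d-2) : ℕ) : ℝ) = (((n-1).choose (d-1) * (d-1) : ℕ) : ℝ) := by
          exact_mod_cast congrArg (Nat.cast (R := ℝ)) hid
        push_cast at this
        linarith
      calc ∑ h ∈ H.filter (fun h => h.card = d), (W:ℝ) * (C h.card * Real.log n / ((n - 1).choose (h.card - 1)))
          = ∑ h ∈ H.filter (fun h => h.card = d), (W:ℝ) * (C d * Real.log n / (((n - 1).choose (d - 1) : ℕ):ℝ)) := by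
            refine Finset.sum_congr rfl fun h hh => ?_
            rw [(Finset.mem_filter.1 hh).2]
        _ = ((H.filter (fun h => h.card = d)).card : ℝ) * ((W:ℝ) * (C d * Real.log n / (((n - 1).choose (d - 1) : ℕ):ℝ))) := by
            rw [Finset.sum_const, nsmul_eq_mul]
        _ ≤ (16*(R:ℝ)^2 * ((n-2).choose (d-2) : ℝ)) * ((W:ℝ) * (C d * Real.log n / (((n - 1).choose (d - 1) : ℕ):ℝ))) := by
            refine mul_le_mul_of_nonneg_right hNd' (by positivity)
        _ = (16*(R:ℝ)^2 * (W:ℝ) * C d * Real.log n) * (((n-2).choose (d-2) : ℝ) / (((n - 1).choose (d - 1) : ℕ):ℝ)) := by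
            ring
        _ = (16*(R:ℝ)^2 * (W:ℝ) * C d * Real.log n) * (((d-1 : ℕ):ℝ) / ((n-1 : ℕ):ℝ)) := by
            rw [hba]
        _ = (16*(R:ℝ)^2*W*Real.log n/((n-1 : ℕ):ℝ)) * (C d * ((d-1 : ℕ):ℝ)) := by
            ring
    calc ∑ d ∈ Finset.Icc 2 W, ∑ h ∈ H.filter (fun h => h.card = d), (W:ℝ) * (C h.card * Real.log n / ((n - 1).choose (h.card - 1)))
        ≤ ∑ d ∈ Finset.Icc 2 W, (16*(R:ℝ)^2*W*Real.log n/((n-1 : ℕ):ℝ)) * (C d * ((d-1 : ℕ):ℝ)) :=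
          Finset.sum_le_sum hterm
      _ = (16*(R:ℝ)^2*W*Real.log n/((n-1 : ℕ):ℝ)) * K := by
          rw [← Finset.mul_sum]
      _ = (16*(R:ℝ)^2*(W:ℝ)*Real.log n*K)/((n-1 : ℕ):ℝ) := by ring
      _ ≤ (((R:ℝ)+1) * (16 * (W:ℝ) * K * (R:ℝ) * Real.log n))/((n-1 : ℕ):ℝ) := by
          have hnum : 16*(R:ℝ)^2*(W:ℝ)*Real.log n*K ≤ ((R:ℝ)+1) * (16 * (W:ℝ) * K * (R:ℝ) * Real.log n) := by
            nlinarith [mul_nonneg (mul_nonneg (mul_nonneg (Nat.cast_nonneg (α := ℝ) W) hK0) hlogn) (Nat.cast_nonneg (α := ℝ) R)]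
          exact div_le_div_of_nonneg_right hnum hnn.le |>.trans_eq rfl
      _ = ((R+1 : ℕ):ℝ) * (16 * W * K * R * Real.log n / ((n-1 : ℕ):ℝ)) := by push_cast; ring
  -- combine
  have hcomb : ((R+1 : ℕ) : ℝ≥0∞) * μ {ω | 3 * R ≤ (T.filter (fun v => P ω v)).card}ᶜ
      ≤ ((R+1 : ℕ) : ℝ≥0∞) * ENNReal.ofReal (16 * W * K * R * Real.log n / ((n-1 : ℕ):ℝ)) := by
    refine le_trans hmarkov (le_trans hlint (le_trans hsum ?_))
    refine le_trans (ENNReal.ofReal_le_ofReal hreal) ?_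
    rw [ENNReal.ofReal_mul (by positivity), ENNReal.ofReal_natCast]
  have := (ENNReal.mul_le_mul_iff_right (a := ((R+1 : ℕ) : ℝ≥0∞))
    (by exact_mod_cast Nat.succ_ne_zero R) (ENNReal.natCast_ne_top _)).1 hcomb
  exact this

theorem sparse_hypergraph_isolated_set
    (W : ℕ) (hW : 2 ≤ W) (C : ℕ → ℝ) (hC : ∀ d ∈ Finset.Icc 2 W, 0 < C d)
    (Ω : ℕ → Type*) [∀ n, MeasurableSpace (Ω n)]
    (μ : ∀ n, Measure (Ω n)) [∀ n, IsProbabilityMeasure (μ n)]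
    (E : ∀ n, Finset (Fin n) → Ω n → Bool)
    (hmeas : ∀ n h, Measurable (E n h))
    (hprob : ∀ n, 2 ≤ n → ∀ h : Finset (Fin n), 2 ≤ h.card → h.card ≤ W →
      μ n {ω | E n h ω = true}
        ≤ ENNReal.ofReal (C h.card * Real.log n / ((n - 1).choose (h.card - 1))))
    (hindep : ∀ n, iIndepFun
      (fun h : {h : Finset (Fin n) // 2 ≤ h.card ∧ h.card ≤ W} => E n h.1) (μ n))
    (r : ℕ → ℕ) (hr : ∀ n, r n = ⌈(n : ℝ) / (Real.log n) ^ 3⌉₊)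
    (T : ∀ n, Finset (Fin n)) (hT : ∀ᶠ n in atTop, (T n).card = 4 * r n) :
    Tendsto (fun n => μ n {ω | 3 * r n ≤ ((T n).filter (fun v =>
        ∀ h : Finset (Fin n), 2 ≤ h.card → h.card ≤ W → E n h ω = true →
          v ∈ h → (h ∩ T n).card < 2)).card})
      atTop (nhds 1) := by
  classical
  set K : ℝ := ∑ d ∈ Finset.Icc 2 W, C d * ((d-1 : ℕ):ℝ) with hKdef
  set good : ∀ n, Set (Ω n) := fun n => {ω | 3 * r n ≤ ((T n).filter (fun v =>
        ∀ h : Finset (Fin n), 2 ≤ h.card → h.card ≤ W → E n h ω = true →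
          v ∈ h → (h ∩ T n).card < 2)).card} with hgood
  -- measurability
  have hgm : ∀ n, MeasurableSet (good n) := by
    intro n
    have heq : good n = (fun ω => (fun b : Finset (Fin n) → Bool => ((T n).filter (fun v =>
        ∀ h : Finset (Fin n), 2 ≤ h.card → h.card ≤ W → b h = true →
          v ∈ h → (h ∩ T n).card < 2)).card) (fun h => E n h ω)) ⁻¹' (Set.Ici (3 * r n)) := rfl
    rw [heq]
    exact (measurable_comp_E (β := ℕ) (E n) (hmeas n) (fun b => ((T n).filter (fun v =>
        ∀ h : Finset (Fin n), 2 ≤ h.card → h.card ≤ W → b h = true →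
          v ∈ h → (h ∩ T n).card < 2)).card)) measurableSet_Ici
  -- bad event bound eventually
  have hbound : ∀ᶠ n in atTop, μ n (good n)ᶜ
      ≤ ENNReal.ofReal (16 * (W:ℝ) * K * (r n) * Real.log n / ((n-1 : ℕ):ℝ)) := by
    filter_upwards [hT, eventually_ge_atTop (max W 2)] with n hTn hn
    exact key_bound W C hC (μ n) n (E n) (hmeas n)
      (hprob n (le_trans (le_max_right W 2) hn)) (r n) (T n) hTn
      (le_trans (le_max_left W 2) hn) (le_trans (le_max_right W 2) hn)
  -- the real bound tends to 0
  have hlogtend : Tendsto (fun n : ℕ => Real.log n) atTop atTop :=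
    Real.tendsto_log_atTop.comp tendsto_natCast_atTop_atTop
  have h1 : Tendsto (fun n : ℕ => 2 / (Real.log n)^2) atTop (nhds 0) := by
    have hsq : Tendsto (fun n : ℕ => (Real.log n)^2) atTop atTop := by
      simpa [sq] using hlogtend.atTop_mul_atTop₀ hlogtend
    have := (tendsto_inv_atTop_zero.comp hsq).const_mul (2:ℝ)
    simpa [div_eq_mul_inv, Function.comp] using this
  have h2 : Tendsto (fun n : ℕ => 2 * (Real.log n / (n:ℝ))) atTop (nhds 0) := by
    have := (Real.isLittleO_log_id_atTop.tendsto_div_nhds_zero).comp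
      (tendsto_natCast_atTop_atTop (R := ℝ))
    have h2' := this.const_mul (2:ℝ)
    simpa [Function.comp] using h2'
  have hsum0 : Tendsto (fun n : ℕ => 2 / (Real.log n)^2 + 2 * (Real.log n / (n:ℝ)))
      atTop (nhds 0) := by simpa using h1.add h2
  have hg : Tendsto (fun n : ℕ => (r n : ℝ) * Real.log n / ((n-1 : ℕ):ℝ)) atTop (nhds 0) := by
    refine tendsto_of_tendsto_of_tendsto_of_le_of_le' tendsto_const_nhds hsum0 ?_ ?_
    · filter_upwards [eventually_ge_atTop 2] with n hn
      have : (0:ℝ) < ((n-1:ℕ):ℝ) ∨ True := Or.inr trivial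
      positivity
    · filter_upwards [eventually_ge_atTop 3] with n hn
      set L := Real.log n with hL
      have hnR : (3:ℝ) ≤ (n:ℝ) := by exact_mod_cast hn
      have hL1 : 1 ≤ L := by
        rw [hL, Real.le_log_iff_exp_le (by linarith)]
        calc Real.exp 1 ≤ 2.7182818286 := Real.exp_one_lt_d9.le
          _ ≤ (n:ℝ) := by linarith
      have hL0 : 0 < L := lt_of_lt_of_le one_pos hL1
      have hcast : ((n-1:ℕ):ℝ) = (n:ℝ) - 1 := by
        have : (1:ℕ) ≤ n := by omega
        push_cast [Nat.cast_sub this]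
        ring
      have hrle : (r n : ℝ) ≤ (n:ℝ)/L^3 + 1 := by
        rw [hr n]
        exact (Nat.ceil_lt_add_one (by positivity)).le
      have hkey : ((n:ℝ)/L^3+1)*L/((n:ℝ)/2) = 2/L^2 + 2*(L/(n:ℝ)) := by
        field_simp
      calc (r n : ℝ) * Real.log n / ((n-1:ℕ):ℝ) = (r n : ℝ) * L / ((n:ℝ)-1) := by
            rw [hcast, hL]
        _ ≤ ((n:ℝ)/L^3+1)*L/((n:ℝ)-1) :=
            div_le_div_of_nonneg_right (mul_le_mul_of_nonneg_right hrle hL0.le) (by linarith) |>.trans_eq rfl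
        _ ≤ ((n:ℝ)/L^3+1)*L/((n:ℝ)/2) := by
            apply div_le_div_of_nonneg_left (by positivity) (by positivity) (by linarith)
        _ = 2/L^2 + 2*(L/(n:ℝ)) := hkey
  have hB : Tendsto (fun n : ℕ => 16 * (W:ℝ) * K * (r n) * Real.log n / ((n-1 : ℕ):ℝ))
      atTop (nhds 0) := by
    have := hg.const_mul (16 * (W:ℝ) * K)
    rw [mul_zero] at this
    refine this.congr fun n => by ring
  have hbadtend : Tendsto (fun n => μ n (good n)ᶜ) atTop (nhds 0) := by
    refine tendsto_of_tendsto_of_tendsto_of_le_of_le' tendsto_const_nhds ?_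
      (Eventually.of_forall fun n => zero_le) hbound
    have := ENNReal.tendsto_ofReal hB
    simpa using this
  have hfinal : Tendsto (fun n => (1 : ℝ≥0∞) - μ n (good n)ᶜ) atTop (nhds 1) := by
    have := ENNReal.Tendsto.sub (tendsto_const_nhds : Tendsto (fun _ : ℕ => (1:ℝ≥0∞)) atTop (nhds 1))
      hbadtend (Or.inl ENNReal.one_ne_top)
    simpa using this
  refine hfinal.congr fun n => ?_
  rw [← prob_compl_eq_one_sub (hgm n).compl, compl_compl]
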